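/- The map f is a homeomorphism of 𝔻 onto itself, with inverse F: that is, f maps 𝔻 into 𝔻, F maps 𝔻 into 𝔻, f and F are continuous on 𝔻, and F(f(z)) = z and f(F(z)) = z for all z ∈ 𝔻. -/

import Mathlib

/-- The open unit disk in `ℂ`. -/
def unitDisk : Set ℂ := {z : ℂ | ‖z‖ < 1}

/-- The map `f` on the open unit disk. -/
noncomputable def mapF (z : ℂ) : ℂ :=
  if z = 0 then 0 else
    (Real.exp 1 * z / (Real.exp 1 * ‖z‖ - ‖z‖ + 1)) *
      Complex.exp (2 * Real.pi * Complex.I *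
        Real.log (‖z‖ / (1 - ‖z‖)))

/-- The map `F`, the inverse of `f`, on the open unit disk. -/
noncomputable def mapFinv (w : ℂ) : ℂ :=
  if w = 0 then 0 else
    ((Real.exp 1)⁻¹ * w / ((Real.exp 1)⁻¹ * ‖w‖ - ‖w‖ + 1)) *
      Complex.exp (-(2 * Real.pi * Complex.I *
        Real.log (‖w‖ / (1 - ‖w‖))))

lemma two_le_E : (2:ℝ) ≤ Real.exp 1 := by
  have := Real.add_one_le_exp (1:ℝ); linarith

lemma abs_phase (t : ℝ) :
    ‖Complex.exp (2 * (Real.pi:ℂ) * Complex.I * (t:ℂ))‖ = 1 := by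
  rw [Complex.norm_exp]
  norm_num [Complex.mul_re, Complex.mul_im]

lemma abs_phase_neg (t : ℝ) :
    ‖Complex.exp (-(2 * (Real.pi:ℂ) * Complex.I * (t:ℂ)))‖ = 1 := by
  rw [Complex.norm_exp]
  norm_num [Complex.mul_re, Complex.mul_im]

lemma D_pos (r : ℝ) (hr : 0 ≤ r) : 0 < Real.exp 1 * r - r + 1 := by
  nlinarith [two_le_E]

lemma D'_pos (r : ℝ) (hr : 0 ≤ r) (h1 : r < 1) : 0 < (Real.exp 1)⁻¹ * r - r + 1 := by
  have h : 0 ≤ (Real.exp 1)⁻¹ * r := by positivity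
  linarith

lemma mapF_abs (z : ℂ) (hz : z ≠ 0) :
    ‖mapF z‖
      = Real.exp 1 * ‖z‖ / (Real.exp 1 * ‖z‖ - ‖z‖ + 1) := by
  have hr : 0 ≤ ‖z‖ := norm_nonneg z
  rw [mapF, if_neg hz, norm_mul, abs_phase, mul_one, norm_div, norm_mul,
    Complex.norm_real, Real.norm_eq_abs, abs_of_pos (Real.exp_pos 1)]
  congr 1
  rw [show ((Real.exp 1 : ℂ) * (‖z‖ : ℂ) - (‖z‖ : ℂ) + 1)
      = ((Real.exp 1 * ‖z‖ - ‖z‖ + 1 : ℝ) : ℂ) by push_cast; ring,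
    Complex.norm_real, Real.norm_eq_abs, abs_of_pos (D_pos _ hr)]

lemma mapFinv_abs (w : ℂ) (hw : w ≠ 0) (hw1 : ‖w‖ < 1) :
    ‖mapFinv w‖
      = (Real.exp 1)⁻¹ * ‖w‖ / ((Real.exp 1)⁻¹ * ‖w‖ - ‖w‖ + 1) := by
  have hr : 0 ≤ ‖w‖ := norm_nonneg w
  rw [mapFinv, if_neg hw, norm_mul, abs_phase_neg, mul_one, norm_div, norm_mul,
    Complex.norm_real, Real.norm_eq_abs, abs_of_pos (inv_pos.2 (Real.exp_pos 1))]
  congr 1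
  rw [show ((((Real.exp 1)⁻¹ : ℝ) : ℂ) * (‖w‖ : ℂ) - (‖w‖ : ℂ) + 1)
      = (((Real.exp 1)⁻¹ * ‖w‖ - ‖w‖ + 1 : ℝ) : ℂ) by push_cast; ring,
    Complex.norm_real, Real.norm_eq_abs, abs_of_pos (D'_pos _ hr hw1)]

lemma mapF_ne_zero (z : ℂ) (hz : z ≠ 0) : mapF z ≠ 0 := by
  have h0 : 0 < ‖z‖ := norm_pos_iff.mpr hz
  have : 0 < ‖mapF z‖ := by
    rw [mapF_abs z hz]
    exact div_pos (by positivity) (D_pos _ h0.le)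
  exact fun h => by simp [h] at this

lemma mapFinv_ne_zero (w : ℂ) (hw : w ≠ 0) (hw1 : ‖w‖ < 1) : mapFinv w ≠ 0 := by
  have h0 : 0 < ‖w‖ := norm_pos_iff.mpr hw
  have : 0 < ‖mapFinv w‖ := by
    rw [mapFinv_abs w hw hw1]
    exact div_pos (by positivity) (D'_pos _ h0.le hw1)
  exact fun h => by simp [h] at this


lemma left_inv (z : ℂ) (hz0 : z ≠ 0) (hz1 : ‖z‖ < 1) :
    mapFinv (mapF z) = z := by
  set r : ℝ := ‖z‖ with hrdef
  have hr0 : 0 < r := norm_pos_iff.mpr hz0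
  have hE0 : (0:ℝ) < Real.exp 1 := Real.exp_pos 1
  have hDpos : 0 < Real.exp 1 * r - r + 1 := D_pos r hr0.le
  set D : ℝ := Real.exp 1 * r - r + 1 with hDdef
  set L : ℝ := Real.log (r / (1 - r)) with hLdef
  have hwabs : ‖mapF z‖ = Real.exp 1 * r / D := mapF_abs z hz0
  have hw0 : mapF z ≠ 0 := mapF_ne_zero z hz0
  have h1r : (1:ℝ) - r ≠ 0 := by linarith
  have hscal : (Real.exp 1)⁻¹ * (Real.exp 1 * r / D) - (Real.exp 1 * r / D) + 1 = 1 / D := by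
    field_simp
    rw [hDdef]; ring
  have hlog : Real.log ((Real.exp 1 * r / D) / (1 - Real.exp 1 * r / D)) = 1 + L := by
    have h1 : 1 - Real.exp 1 * r / D = (1 - r) / D := by
      field_simp
      rw [hDdef]; ring
    have h2 : Real.exp 1 * r / D / ((1 - r) / D) = Real.exp 1 * (r / (1 - r)) := by
      field_simp
    rw [h1, h2, Real.log_mul hE0.ne' (div_pos hr0 (by linarith)).ne', Real.log_exp, hLdef]
  have hexp : Complex.exp (2*(Real.pi:ℂ)*Complex.I*(L:ℂ))
      * Complex.exp (-(2*(Real.pi:ℂ)*Complex.I*((1+L : ℝ):ℂ))) = 1 := by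
    rw [← Complex.exp_add,
      show (2*(Real.pi:ℂ)*Complex.I*(L:ℂ) + -(2*(Real.pi:ℂ)*Complex.I*((1+L : ℝ):ℂ)))
        = -(2*(Real.pi:ℂ)*Complex.I) by push_cast; ring,
      Complex.exp_neg, Complex.exp_two_pi_mul_I, inv_one]
  rw [mapFinv, if_neg hw0, hwabs, hlog]
  rw [mapF, if_neg hz0, ← hrdef, ← hLdef]
  rw [show ((((Real.exp 1)⁻¹ : ℝ) : ℂ) * ((Real.exp 1 * r / D : ℝ) : ℂ)
      - ((Real.exp 1 * r / D : ℝ) : ℂ) + 1)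
      = (((Real.exp 1)⁻¹ * (Real.exp 1 * r / D) - (Real.exp 1 * r / D) + 1 : ℝ) : ℂ) by
    push_cast; ring]
  rw [hscal]
  have hDne : ((D:ℝ):ℂ) ≠ 0 := by exact_mod_cast hDpos.ne'
  have hEne : ((Real.exp 1 : ℝ):ℂ) ≠ 0 := by exact_mod_cast hE0.ne'
  push_cast
  push_cast at hexp
  have hDC : ((D:ℝ):ℂ) = Complex.exp 1 * (r:ℂ) - (r:ℂ) + 1 := by
    rw [hDdef]; push_cast; ring
  rw [hDC]
  have hX : (Complex.exp 1 : ℂ) ≠ 0 := Complex.exp_ne_zero 1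
  have hDne' : (Complex.exp 1 * (r:ℂ) - (r:ℂ) + 1) ≠ 0 := by rw [← hDC]; exact hDne
  have hN : 1 - (r:ℂ) + r * Complex.exp 1 ≠ 0 := by rw [show 1 - (r:ℂ) + r * Complex.exp 1 = Complex.exp 1 * (r:ℂ) - (r:ℂ) + 1 by ring]; exact hDne'
  field_simp
  have hA : (r:ℂ) * (Complex.exp 1 - 1) + 1 ≠ 0 := by rw [show (r:ℂ) * (Complex.exp 1 - 1) + 1 = Complex.exp 1 * (r:ℂ) - (r:ℂ) + 1 by ring]; exact hDne'
  rw [mul_assoc, mul_div_cancel_left₀ _ hA, hexp]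

lemma aux_scal (E r : ℝ) (hE : E ≠ 0) (hD : E⁻¹*r - r + 1 ≠ 0) :
    E * (E⁻¹ * r / (E⁻¹*r - r + 1)) - (E⁻¹ * r / (E⁻¹*r - r + 1)) + 1 = 1 / (E⁻¹*r - r + 1) := by
  have h : E * (E⁻¹ * r / (E⁻¹*r - r + 1)) - (E⁻¹ * r / (E⁻¹*r - r + 1)) + 1
      = (E * (E⁻¹ * r) - E⁻¹*r + (E⁻¹*r - r + 1)) / (E⁻¹*r - r + 1) := by
    rw [← mul_div_assoc, add_div, sub_div, div_self hD]
  rw [h, ← mul_assoc, mul_inv_cancel₀ hE, one_mul]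
  congr 1
  ring

lemma aux_h1 (E r : ℝ) (hD : E⁻¹*r - r + 1 ≠ 0) :
    1 - E⁻¹ * r / (E⁻¹*r - r + 1) = (1 - r) / (E⁻¹*r - r + 1) := by
  rw [show ((1:ℝ) - r) = (E⁻¹*r - r + 1) - E⁻¹*r by ring, sub_div, div_self hD]

lemma aux_h2 (E r : ℝ) (hD : E⁻¹*r - r + 1 ≠ 0) :
    E⁻¹ * r / (E⁻¹*r - r + 1) / ((1 - r) / (E⁻¹*r - r + 1)) = E⁻¹ * (r / (1 - r)) := by
  rw [div_div_div_cancel_right₀, mul_div_assoc]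
  exact hD

lemma right_inv (w : ℂ) (hz0 : w ≠ 0) (hz1 : ‖w‖ < 1) :
    mapF (mapFinv w) = w := by
  set r : ℝ := ‖w‖ with hrdef
  have hr0 : 0 < r := norm_pos_iff.mpr hz0
  have hE0 : (0:ℝ) < Real.exp 1 := Real.exp_pos 1
  have hDpos : 0 < (Real.exp 1)⁻¹ * r - r + 1 := D'_pos r hr0.le hz1
  set D : ℝ := (Real.exp 1)⁻¹ * r - r + 1 with hDdef
  set L : ℝ := Real.log (r / (1 - r)) with hLdef
  have hwabs : ‖mapFinv w‖ = (Real.exp 1)⁻¹ * r / D := mapFinv_abs w hz0 hz1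
  have hw0 : mapFinv w ≠ 0 := mapFinv_ne_zero w hz0 hz1
  have h1r : (1:ℝ) - r ≠ 0 := by linarith
  have hDne0 : (Real.exp 1)⁻¹ * r - r + 1 ≠ 0 := by rw [← hDdef]; exact hDpos.ne'
  have hscal : Real.exp 1 * ((Real.exp 1)⁻¹ * r / D) - ((Real.exp 1)⁻¹ * r / D) + 1
      = 1 / D := by
    rw [hDdef]; exact aux_scal _ _ hE0.ne' hDne0
  have hlog : Real.log (((Real.exp 1)⁻¹ * r / D) / (1 - (Real.exp 1)⁻¹ * r / D)) = -1 + L := by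
    have h1 : 1 - (Real.exp 1)⁻¹ * r / D = (1 - r) / D := by
      rw [hDdef]; exact aux_h1 _ _ hDne0
    have h2 : (Real.exp 1)⁻¹ * r / D / ((1 - r) / D) = (Real.exp 1)⁻¹ * (r / (1 - r)) := by
      rw [hDdef]; exact aux_h2 _ _ hDne0
    rw [h1, h2, Real.log_mul (inv_ne_zero hE0.ne') (div_pos hr0 (by linarith)).ne',
      Real.log_inv, Real.log_exp, hLdef]
  have hexp : Complex.exp (-(2*(Real.pi:ℂ)*Complex.I*(L:ℂ)))
      * Complex.exp (2*(Real.pi:ℂ)*Complex.I*((-1+L : ℝ):ℂ)) = 1 := by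
    rw [← Complex.exp_add,
      show (-(2*(Real.pi:ℂ)*Complex.I*(L:ℂ)) + 2*(Real.pi:ℂ)*Complex.I*((-1+L : ℝ):ℂ))
        = -(2*(Real.pi:ℂ)*Complex.I) by push_cast; ring,
      Complex.exp_neg, Complex.exp_two_pi_mul_I, inv_one]
  rw [mapF, if_neg hw0, hwabs, hlog]
  rw [mapFinv, if_neg hz0, ← hrdef, ← hLdef]
  rw [show (((Real.exp 1 : ℝ) : ℂ) * (((Real.exp 1)⁻¹ * r / D : ℝ) : ℂ)
      - (((Real.exp 1)⁻¹ * r / D : ℝ) : ℂ) + 1)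
      = ((Real.exp 1 * ((Real.exp 1)⁻¹ * r / D) - ((Real.exp 1)⁻¹ * r / D) + 1 : ℝ) : ℂ) by
    push_cast; ring]
  rw [hscal]
  have hDne : ((D:ℝ):ℂ) ≠ 0 := by exact_mod_cast hDpos.ne'
  push_cast
  push_cast at hexp
  have hX : (Complex.exp 1 : ℂ) ≠ 0 := Complex.exp_ne_zero 1
  have hGC : ((D:ℝ):ℂ) = (Complex.exp 1)⁻¹ * ((r:ℂ) - Complex.exp 1 * (r:ℂ) + Complex.exp 1) := by
    rw [hDdef]; push_cast; field_simp
  have hGne : ((r:ℂ) - Complex.exp 1 * (r:ℂ) + Complex.exp 1) ≠ 0 := by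
    intro h
    apply hDne
    rw [hGC, h, mul_zero]
  rw [hGC, show (Complex.exp 1)⁻¹ * (r:ℂ) - (r:ℂ) + 1
      = (Complex.exp 1)⁻¹ * ((r:ℂ) - Complex.exp 1 * (r:ℂ) + Complex.exp 1) from by
    field_simp]
  have hN : (r:ℂ) - r * Complex.exp 1 + Complex.exp 1 ≠ 0 := by rw [show (r:ℂ) - r * Complex.exp 1 + Complex.exp 1 = (r:ℂ) - Complex.exp 1 * (r:ℂ) + Complex.exp 1 by ring]; exact hGne
  field_simp
  have hA : (r:ℂ) * (1 - Complex.exp 1) + Complex.exp 1 ≠ 0 := by rw [show (r:ℂ) * (1 - Complex.exp 1) + Complex.exp 1 = (r:ℂ) - Complex.exp 1 * (r:ℂ) + Complex.exp 1 by ring]; exact hGne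
  rw [mul_assoc, mul_div_cancel_left₀ _ hA, hexp]

lemma mapF_abs_le (z : ℂ) : ‖mapF z‖ ≤ Real.exp 1 * ‖z‖ := by
  rcases eq_or_ne z 0 with rfl | h0
  · simp [mapF]
  · have hr : 0 ≤ ‖z‖ := norm_nonneg z
    have hD := D_pos (‖z‖) hr
    rw [mapF_abs z h0, div_le_iff₀ hD]
    have h1 : (0:ℝ) ≤ ‖z‖ * (Real.exp 1 - 1) :=
      mul_nonneg hr (by linarith [two_le_E])
    nlinarith [mul_nonneg (mul_nonneg (Real.exp_pos 1).le hr) h1]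

lemma mapFinv_abs_le (w : ℂ) (h1 : ‖w‖ < 1) :
    ‖mapFinv w‖ ≤ ‖w‖ := by
  rcases eq_or_ne w 0 with rfl | h0
  · simp [mapFinv]
  · have hr : 0 ≤ ‖w‖ := norm_nonneg w
    have hD := D'_pos (‖w‖) hr h1
    have hEi : 0 < (Real.exp 1)⁻¹ := inv_pos.2 (Real.exp_pos 1)
    have hEi1 : (Real.exp 1)⁻¹ ≤ 1 := by
      rw [inv_le_one_iff₀]
      right; linarith [two_le_E]
    rw [mapFinv_abs w h0 h1, div_le_iff₀ hD]
    nlinarith [mul_nonneg (mul_nonneg hr (by linarith : (0:ℝ) ≤ 1 - ‖w‖))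
      (by linarith : (0:ℝ) ≤ 1 - (Real.exp 1)⁻¹)]

lemma mapsTo_F : Set.MapsTo mapF unitDisk unitDisk := by
  intro z hz
  rcases eq_or_ne z 0 with rfl | h0
  · simp [mapF, unitDisk]
  · have hr0 : 0 < ‖z‖ := norm_pos_iff.mpr h0
    have hz1 : ‖z‖ < 1 := hz
    have hD := D_pos (‖z‖) hr0.le
    show ‖mapF z‖ < 1
    rw [mapF_abs z h0, div_lt_one hD]
    linarith

lemma mapsTo_Finv : Set.MapsTo mapFinv unitDisk unitDisk := by
  intro z hz
  rcases eq_or_ne z 0 with rfl | h0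
  · simp [mapFinv, unitDisk]
  · have hr0 : 0 < ‖z‖ := norm_pos_iff.mpr h0
    have hz1 : ‖z‖ < 1 := hz
    have hD := D'_pos (‖z‖) hr0.le hz1
    show ‖mapFinv z‖ < 1
    rw [mapFinv_abs z h0 hz1, div_lt_one hD]
    linarith

lemma cont_body (z : ℂ) (h0 : z ≠ 0) (h1 : ‖z‖ < 1) :
    ContinuousAt (fun w : ℂ =>
      ((Real.exp 1 : ℝ) * w / ((Real.exp 1 : ℝ) * ‖w‖ - (‖w‖ : ℝ) + 1)) *
        Complex.exp (2 * (Real.pi : ℝ) * Complex.I *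
          (Real.log (‖w‖ / (1 - ‖w‖)) : ℝ))) z := by
  have hr0 : 0 < ‖z‖ := norm_pos_iff.mpr h0
  have hA : ContinuousAt (fun w : ℂ => ‖w‖) z := continuous_norm.continuousAt
  have hAc : ContinuousAt (fun w : ℂ => ((‖w‖ : ℝ) : ℂ)) z :=
    Complex.continuous_ofReal.continuousAt.comp hA
  have hden : ContinuousAt (fun w : ℂ =>
      ((Real.exp 1 : ℝ) : ℂ) * ((‖w‖ : ℝ) : ℂ) - ((‖w‖ : ℝ) : ℂ) + 1) z :=
    ((continuousAt_const.mul hAc).sub hAc).add continuousAt_const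
  have hdenne : (((Real.exp 1 : ℝ) : ℂ) * ((‖z‖ : ℝ) : ℂ) - ((‖z‖ : ℝ) : ℂ) + 1) ≠ 0 := by
    rw [show (((Real.exp 1 : ℝ) : ℂ) * ((‖z‖ : ℝ) : ℂ) - ((‖z‖ : ℝ) : ℂ) + 1)
        = ((Real.exp 1 * ‖z‖ - ‖z‖ + 1 : ℝ) : ℂ) by push_cast; ring]
    exact_mod_cast (D_pos (‖z‖) hr0.le).ne'
  have hfrac : ContinuousAt (fun w : ℂ => ‖w‖ / (1 - ‖w‖)) z := by
    apply hA.div (continuousAt_const.sub hA)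
    intro h; linarith [h1, sub_eq_zero.mp h]
  have hlogc : ContinuousAt (fun w : ℂ => Real.log (‖w‖ / (1 - ‖w‖))) z := by
    exact ContinuousAt.comp (g := Real.log)
      (f := fun w : ℂ => ‖w‖ / (1 - ‖w‖))
      (Real.continuousAt_log (div_pos hr0 (by linarith)).ne') hfrac
  have hphase : ContinuousAt (fun w : ℂ => Complex.exp (2 * (Real.pi : ℝ) * Complex.I *
      (Real.log (‖w‖ / (1 - ‖w‖)) : ℝ))) z := by
    apply Complex.continuous_exp.continuousAt.comp
    exact continuousAt_const.mul (Complex.continuous_ofReal.continuousAt.comp hlogc)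
  exact (((continuousAt_const.mul continuousAt_id).div hden hdenne)).mul hphase

lemma cont_F : ContinuousOn mapF unitDisk := by
  intro z hz
  rcases eq_or_ne z 0 with rfl | h0
  · have h : Filter.Tendsto mapF (nhdsWithin 0 unitDisk) (nhds 0) := by
      apply squeeze_zero_norm (a := fun w : ℂ => Real.exp 1 * ‖w‖)
      · intro w
        exact mapF_abs_le w
      · have : Filter.Tendsto (fun w : ℂ => Real.exp 1 * ‖w‖) (nhds 0) (nhds 0) := by
          have h := ((continuous_const.mul continuous_norm :
            Continuous fun w : ℂ => Real.exp 1 * ‖w‖)).tendsto (0 : ℂ)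
          have h' : Filter.Tendsto (fun w : ℂ => Real.exp 1 * ‖w‖) (nhds 0) (nhds (Real.exp 1 * ‖(0:ℂ)‖)) := h
          rw [norm_zero, mul_zero] at h'; exact h'
        exact this.mono_left nhdsWithin_le_nhds
    have h0 : mapF 0 = 0 := by simp [mapF]
    unfold ContinuousWithinAt
    rw [h0]
    exact h
  · apply ContinuousAt.continuousWithinAt
    apply (cont_body z h0 hz).congr
    filter_upwards [isOpen_compl_singleton.mem_nhds h0] with w hw
    rw [mapF, if_neg (show w ≠ 0 from hw)]

lemma cont_body' (z : ℂ) (h0 : z ≠ 0) (h1 : ‖z‖ < 1) :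
    ContinuousAt (fun w : ℂ =>
      (((Real.exp 1)⁻¹ : ℝ) * w / (((Real.exp 1)⁻¹ : ℝ) * ‖w‖ - (‖w‖ : ℝ) + 1)) *
        Complex.exp (-(2 * (Real.pi : ℝ) * Complex.I *
          (Real.log (‖w‖ / (1 - ‖w‖)) : ℝ)))) z := by
  have hr0 : 0 < ‖z‖ := norm_pos_iff.mpr h0
  have hA : ContinuousAt (fun w : ℂ => ‖w‖) z := continuous_norm.continuousAt
  have hAc : ContinuousAt (fun w : ℂ => ((‖w‖ : ℝ) : ℂ)) z :=
    Complex.continuous_ofReal.continuousAt.comp hA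
  have hden : ContinuousAt (fun w : ℂ =>
      ((((Real.exp 1)⁻¹ : ℝ)) : ℂ) * ((‖w‖ : ℝ) : ℂ) - ((‖w‖ : ℝ) : ℂ) + 1) z :=
    ((continuousAt_const.mul hAc).sub hAc).add continuousAt_const
  have hdenne : (((((Real.exp 1)⁻¹ : ℝ)) : ℂ) * ((‖z‖ : ℝ) : ℂ) - ((‖z‖ : ℝ) : ℂ) + 1) ≠ 0 := by
    rw [show (((((Real.exp 1)⁻¹ : ℝ)) : ℂ) * ((‖z‖ : ℝ) : ℂ) - ((‖z‖ : ℝ) : ℂ) + 1)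
        = (((Real.exp 1)⁻¹ * ‖z‖ - ‖z‖ + 1 : ℝ) : ℂ) by push_cast; ring]
    exact_mod_cast (D'_pos (‖z‖) hr0.le h1).ne'
  have hfrac : ContinuousAt (fun w : ℂ => ‖w‖ / (1 - ‖w‖)) z := by
    apply hA.div (continuousAt_const.sub hA)
    intro h; linarith [h1, sub_eq_zero.mp h]
  have hlogc : ContinuousAt (fun w : ℂ => Real.log (‖w‖ / (1 - ‖w‖))) z := by
    exact ContinuousAt.comp (g := Real.log)
      (f := fun w : ℂ => ‖w‖ / (1 - ‖w‖))
      (Real.continuousAt_log (div_pos hr0 (by linarith)).ne') hfrac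
  have hphase : ContinuousAt (fun w : ℂ => Complex.exp (-(2 * (Real.pi : ℝ) * Complex.I *
      (Real.log (‖w‖ / (1 - ‖w‖)) : ℝ)))) z := by
    apply Complex.continuous_exp.continuousAt.comp
    exact (continuousAt_const.mul (Complex.continuous_ofReal.continuousAt.comp hlogc)).neg
  exact (((continuousAt_const.mul continuousAt_id).div hden hdenne)).mul hphase

lemma cont_Finv : ContinuousOn mapFinv unitDisk := by
  intro z hz
  rcases eq_or_ne z 0 with rfl | h0
  · have h : Filter.Tendsto mapFinv (nhdsWithin 0 unitDisk) (nhds 0) := by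
      apply squeeze_zero_norm' (a := fun w : ℂ => ‖w‖)
      · filter_upwards [self_mem_nhdsWithin] with w hw
        exact mapFinv_abs_le w hw
      · have : Filter.Tendsto (fun w : ℂ => ‖w‖) (nhds 0) (nhds 0) := by
          have h := continuous_norm.tendsto (0 : ℂ)
          simpa using h
        exact this.mono_left nhdsWithin_le_nhds
    have h0 : mapFinv 0 = 0 := by simp [mapFinv]
    unfold ContinuousWithinAt
    rw [h0]
    exact h
  · apply ContinuousAt.continuousWithinAt
    apply (cont_body' z h0 hz).congr
    filter_upwards [isOpen_compl_singleton.mem_nhds h0] with w hw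
    rw [mapFinv, if_neg (show w ≠ 0 from hw)]


/-- `f` is a homeomorphism of the open unit disk onto itself, with inverse `F`. -/
theorem stmt_5 :
    Set.MapsTo mapF unitDisk unitDisk ∧ Set.MapsTo mapFinv unitDisk unitDisk ∧
      ContinuousOn mapF unitDisk ∧ ContinuousOn mapFinv unitDisk ∧
      (∀ z ∈ unitDisk, mapFinv (mapF z) = z) ∧ (∀ z ∈ unitDisk, mapF (mapFinv z) = z) := by
  refine ⟨mapsTo_F, mapsTo_Finv, cont_F, cont_Finv, fun z hz => ?_, fun z hz => ?_⟩
  · rcases eq_or_ne z 0 with rfl | h0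
    · simp [mapF, mapFinv]
    · exact left_inv z h0 hz
  · rcases eq_or_ne z 0 with rfl | h0
    · simp [mapF, mapFinv]
    · exact right_inv z h0 hz
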